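/- Rank-k mixed update/downdate: In the mixed setting (X₁ m×n₁ with covariance S₁, Y_u m×k_u appended, Y_d m×k_d removed, X₂ m×n₂ with covariance S₂, n₂ = n₁+k_u−k_d, n₁ ≠ n₂), setting c = (n₂ + √(n₁n₂))/(n₂ − n₁), z = x̄₁ + c·(x̄₂ − x̄₁), K_u = Y_u − z·1_{k_u}ᵀ, and K_d = Y_d − z·1_{k_d}ᵀ, one has (n₂−1)·S₂ = (n₁−1)·S₁ + K_uK_uᵀ − K_dK_dᵀ. -/

import Mathlib

open Matrix

lemma expand_sum {ι : Type*} [Fintype ι] (f g : ι → ℝ) (a b : ℝ) :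
    ∑ l, (f l - a) * (g l - b)
      = (∑ l, f l * g l) - a * (∑ l, g l) - b * (∑ l, f l)
        + (Fintype.card ι : ℝ) * (a * b) := by
  have h : ∀ l, (f l - a) * (g l - b)
      = f l * g l - a * g l - b * f l + a * b := fun l => by ring
  rw [Finset.sum_congr rfl (fun l _ => h l)]
  simp [Finset.sum_add_distrib, Finset.sum_sub_distrib, ← Finset.mul_sum,
    Finset.card_univ, mul_comm]

lemma sum_center {ι : Type*} [Fintype ι] (f g : ι → ℝ) (a b m₁ m₂ : ℝ)
    (hN : (Fintype.card ι : ℝ) ≠ 0)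
    (h1 : m₁ = (∑ l, f l) / (Fintype.card ι : ℝ))
    (h2 : m₂ = (∑ l, g l) / (Fintype.card ι : ℝ)) :
    ∑ l, (f l - a) * (g l - b)
      = (∑ l, (f l - m₁) * (g l - m₂))
        + (Fintype.card ι : ℝ) * (m₁ - a) * (m₂ - b) := by
  rw [expand_sum, expand_sum, h1, h2]
  field_simp
  ring

lemma key_scalar (a b : ℝ) (ha : 0 ≤ a) (hb : 0 ≤ b) (hne : a ≠ b)
    (c : ℝ) (hc : c = (b + Real.sqrt (a * b)) / (b - a)) :
    b * (1 - c) ^ 2 = a * c ^ 2 := by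
  obtain ⟨s, hs, hsq⟩ : ∃ s : ℝ, c = (b + s) / (b - a) ∧ s ^ 2 = a * b :=
    ⟨Real.sqrt (a * b), hc, Real.sq_sqrt (mul_nonneg ha hb)⟩
  have hba : b - a ≠ 0 := sub_ne_zero.mpr (Ne.symm hne)
  rw [hs]
  field_simp
  linear_combination (b - a) * hsq

/-- Sample covariance (with Bessel's correction) of an m×N data matrix. -/
noncomputable def sampleCov {m : ℕ} {ι : Type*} [Fintype ι]
    (Z : Matrix (Fin m) ι ℝ) : Matrix (Fin m) (Fin m) ℝ :=
  ((Fintype.card ι : ℝ) - 1)⁻¹ •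
    ((Matrix.of fun i j => Z i j - (∑ l, Z i l) / (Fintype.card ι : ℝ)) *
      (Matrix.of fun i j => Z i j - (∑ l, Z i l) / (Fintype.card ι : ℝ))ᵀ)

/-- Rank-k mixed update/downdate of the sample covariance matrix, n₁ ≠ n₂. -/
theorem rank_k_mixed_update_downdate {m n₁ ku kd : ℕ}
    (hn₁ : 2 ≤ n₁) (hkd : kd < n₁) (hn₂ : 2 ≤ n₁ + ku - kd)
    (hne : n₁ ≠ n₁ + ku - kd)
    (X₁ : Matrix (Fin m) (Fin n₁) ℝ) (J : Finset (Fin n₁)) (hJ : J.card = kd)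
    (Yd : Matrix (Fin m) {j // j ∈ J} ℝ) (hYd : Yd = X₁.submatrix id Subtype.val)
    (Yu : Matrix (Fin m) (Fin ku) ℝ)
    (X₂ : Matrix (Fin m) ({j // j ∉ J} ⊕ Fin ku) ℝ)
    (hX₂ : X₂ = Matrix.fromCols (X₁.submatrix id Subtype.val) Yu)
    (n₂ : ℕ) (hn₂def : n₂ = n₁ + ku - kd)
    (xbar₁ xbar₂ : Fin m → ℝ)
    (hxbar₁ : ∀ i, xbar₁ i = (∑ j, X₁ i j) / (n₁ : ℝ))
    (hxbar₂ : ∀ i, xbar₂ i = (∑ j, X₂ i j) / (n₂ : ℝ))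
    (c : ℝ) (hc : c = ((n₂ : ℝ) + Real.sqrt ((n₁ : ℝ) * n₂)) / ((n₂ : ℝ) - n₁))
    (z : Fin m → ℝ) (hz : ∀ i, z i = xbar₁ i + c * (xbar₂ i - xbar₁ i))
    (Ku : Matrix (Fin m) (Fin ku) ℝ) (hKu : Ku = Matrix.of fun i j => Yu i j - z i)
    (Kd : Matrix (Fin m) {j // j ∈ J} ℝ) (hKd : Kd = Matrix.of fun i j => Yd i j - z i) :
    ((n₂ : ℝ) - 1) • sampleCov X₂ =
      ((n₁ : ℝ) - 1) • sampleCov X₁ + Ku * Kuᵀ - Kd * Kdᵀ := by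
  have hn₂' : 2 ≤ n₂ := hn₂def ▸ hn₂
  have hneN : n₁ ≠ n₂ := hn₂def ▸ hne
  have hcardJ : Fintype.card {j // j ∈ J} = kd := by
    exact (Fintype.card_coe J).trans hJ
  have hcard : Fintype.card ({j // j ∉ J} ⊕ Fin ku) = n₂ := by
    rw [Fintype.card_sum, Fintype.card_fin, Fintype.card_subtype_compl, hcardJ,
      Fintype.card_fin]
    omega
  have hn₁0 : (n₁ : ℝ) ≠ 0 := Nat.cast_ne_zero.mpr (by omega)
  have hn₂0 : (n₂ : ℝ) ≠ 0 := Nat.cast_ne_zero.mpr (by omega)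
  have hn₁1 : ((n₁ : ℝ) - 1) ≠ 0 := by
    have : (1:ℝ) < n₁ := by exact_mod_cast hn₁
    linarith
  have hn₂1 : ((n₂ : ℝ) - 1) ≠ 0 := by
    have : (1:ℝ) < n₂ := by exact_mod_cast hn₂'
    linarith
  have hneR : (n₁ : ℝ) ≠ (n₂ : ℝ) := by exact_mod_cast hneN
  have key : (n₂ : ℝ) * (1 - c) ^ 2 = (n₁ : ℝ) * c ^ 2 :=
    key_scalar _ _ (Nat.cast_nonneg _) (Nat.cast_nonneg _) hneR c hc
  ext i j
  simp only [sampleCov, Matrix.smul_apply, Matrix.add_apply, Matrix.sub_apply,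
    Matrix.mul_apply, Matrix.transpose_apply, Matrix.of_apply, smul_eq_mul,
    hcard, Fintype.card_fin]
  rw [show (∑ l, X₂ i l) / (n₂ : ℝ) = xbar₂ i from (hxbar₂ i).symm,
    show (∑ l, X₂ j l) / (n₂ : ℝ) = xbar₂ j from (hxbar₂ j).symm,
    show (∑ l, X₁ i l) / (n₁ : ℝ) = xbar₁ i from (hxbar₁ i).symm,
    show (∑ l, X₁ j l) / (n₁ : ℝ) = xbar₁ j from (hxbar₁ j).symm]
  rw [mul_inv_cancel_left₀ hn₂1, mul_inv_cancel_left₀ hn₁1]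
  -- abbreviations
  have hB₂ : ∑ l, (X₂ i l - z i) * (X₂ j l - z j)
      = (∑ l, (X₂ i l - xbar₂ i) * (X₂ j l - xbar₂ j))
        + (n₂ : ℝ) * (xbar₂ i - z i) * (xbar₂ j - z j) := by
    have := sum_center (fun l => X₂ i l) (fun l => X₂ j l) (z i) (z j)
      (xbar₂ i) (xbar₂ j) (by rw [hcard]; exact hn₂0)
      (by rw [hcard]; exact hxbar₂ i) (by rw [hcard]; exact hxbar₂ j)
    rwa [hcard] at this
  have hB₁ : ∑ l, (X₁ i l - z i) * (X₁ j l - z j)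
      = (∑ l, (X₁ i l - xbar₁ i) * (X₁ j l - xbar₁ j))
        + (n₁ : ℝ) * (xbar₁ i - z i) * (xbar₁ j - z j) := by
    have := sum_center (fun l => X₁ i l) (fun l => X₁ j l) (z i) (z j)
      (xbar₁ i) (xbar₁ j) (by rw [Fintype.card_fin]; exact hn₁0)
      (by rw [Fintype.card_fin]; exact hxbar₁ i)
      (by rw [Fintype.card_fin]; exact hxbar₁ j)
    rwa [Fintype.card_fin] at this
  have hsplit : ∑ l, (X₂ i l - z i) * (X₂ j l - z j)
      = (∑ l, (X₁ i l - z i) * (X₁ j l - z j))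
        + (∑ u, Ku i u * Ku j u) - (∑ d, Kd i d * Kd j d) := by
    rw [Fintype.sum_sum_type]
    have h₁ : ∑ l : {j // j ∉ J}, (X₂ i (Sum.inl l) - z i) * (X₂ j (Sum.inl l) - z j)
        = ∑ l : {j // j ∉ J}, (X₁ i l.1 - z i) * (X₁ j l.1 - z j) := by
      refine Finset.sum_congr rfl fun l _ => ?_
      simp [hX₂, Matrix.fromCols]
    have h₂ : ∑ u : Fin ku, (X₂ i (Sum.inr u) - z i) * (X₂ j (Sum.inr u) - z j)
        = ∑ u, Ku i u * Ku j u := by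
      refine Finset.sum_congr rfl fun u _ => ?_
      simp [hX₂, hKu, Matrix.fromCols]
    have h₃ : ∑ d : {j // j ∈ J}, Kd i d * Kd j d
        = ∑ d : {j // j ∈ J}, (X₁ i d.1 - z i) * (X₁ j d.1 - z j) := by
      refine Finset.sum_congr rfl fun d _ => ?_
      simp [hKd, hYd]
    rw [h₁, h₂, h₃]
    have hsub₁ : ∑ l : {j // j ∉ J}, (X₁ i l.1 - z i) * (X₁ j l.1 - z j)
        = ∑ l ∈ Jᶜ, (X₁ i l - z i) * (X₁ j l - z j) :=
      (Finset.sum_subtype Jᶜ (fun x => Finset.mem_compl)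
        (fun l => (X₁ i l - z i) * (X₁ j l - z j))).symm
    have hsub₂ : ∑ d : {j // j ∈ J}, (X₁ i d.1 - z i) * (X₁ j d.1 - z j)
        = ∑ d ∈ J, (X₁ i d - z i) * (X₁ j d - z j) :=
      (Finset.sum_subtype J (fun x => Iff.rfl)
        (fun l => (X₁ i l - z i) * (X₁ j l - z j))).symm
    rw [hsub₁, hsub₂, ← Finset.sum_add_sum_compl J
      (fun l => (X₁ i l - z i) * (X₁ j l - z j))]
    ring
  have hzi : ∀ t, xbar₂ t - z t = (1 - c) * (xbar₂ t - xbar₁ t) := fun t => by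
    rw [hz]; ring
  have hzi' : ∀ t, xbar₁ t - z t = -(c * (xbar₂ t - xbar₁ t)) := fun t => by
    rw [hz]; ring
  have hcorr : (n₂ : ℝ) * (xbar₂ i - z i) * (xbar₂ j - z j)
      = (n₁ : ℝ) * (xbar₁ i - z i) * (xbar₁ j - z j) := by
    rw [hzi i, hzi j, hzi' i, hzi' j]
    linear_combination (xbar₂ i - xbar₁ i) * (xbar₂ j - xbar₁ j) * key
  linarith [hB₂, hB₁, hsplit, hcorr]
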